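/- Let x̄ ∈ F be a locally optimal solution of (MPSC) and assume MPSC-SSOCQ holds at x̄. Then x̄ is an M-stationary point of (MPSC). -/

import Mathlib

open Set Filter Topology Metric

noncomputable section

namespace MPSC

abbrev Vec (n : ℕ) := EuclideanSpace ℝ (Fin n)

variable {n m p l : ℕ}

open scoped Classical in
/-- Sum of a function over an index set (finite ambient type). -/
noncomputable def sumOver {α β : Type*} [Fintype α] [AddCommMonoid β]
    (S : Set α) (v : α → β) : β :=
  ∑ a, if a ∈ S then v a else 0

/-- The feasible set of (MPSC). -/
def Feas (g : Fin m → Vec n → ℝ) (h : Fin p → Vec n → ℝ)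
    (G H : Fin l → Vec n → ℝ) : Set (Vec n) :=
  {x | (∀ i, g i x ≤ 0) ∧ (∀ j, h j x = 0) ∧ ∀ k, G k x * H k x = 0}

/-- Index set of active inequality constraints. -/
def Ig (g : Fin m → Vec n → ℝ) (xb : Vec n) : Set (Fin m) := {i | g i xb = 0}

def IG (G H : Fin l → Vec n → ℝ) (xb : Vec n) : Set (Fin l) :=
  {k | G k xb = 0 ∧ H k xb ≠ 0}

def IH (G H : Fin l → Vec n → ℝ) (xb : Vec n) : Set (Fin l) :=
  {k | G k xb ≠ 0 ∧ H k xb = 0}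

def IGH (G H : Fin l → Vec n → ℝ) (xb : Vec n) : Set (Fin l) :=
  {k | G k xb = 0 ∧ H k xb = 0}

/-- (β1, β2) is a disjoint bipartition of I_GH. -/
def Partition (G H : Fin l → Vec n → ℝ) (xb : Vec n) (β1 β2 : Set (Fin l)) : Prop :=
  β1 ∩ β2 = ∅ ∧ β1 ∪ β2 = IGH G H xb

/-- Branch feasible set. -/
def BranchFeas (g : Fin m → Vec n → ℝ) (h : Fin p → Vec n → ℝ)
    (G H : Fin l → Vec n → ℝ) (xb : Vec n) (β1 β2 : Set (Fin l)) : Set (Vec n) :=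
  {x | (∀ i, g i x ≤ 0) ∧ (∀ j, h j x = 0) ∧
    (∀ k ∈ IG G H xb ∪ β1, G k x = 0) ∧ ∀ k ∈ IH G H xb ∪ β2, H k x = 0}

/-- Bouligand tangent cone, as defined in the paper. -/
def tangentCone (Ω : Set (Vec n)) (xb : Vec n) : Set (Vec n) :=
  {d | ∃ t : ℕ → ℝ, ∃ x : ℕ → Vec n, (∀ k, 0 ≤ t k) ∧ (∀ k, x k ∈ Ω) ∧
    Tendsto x atTop (nhds xb) ∧ Tendsto (fun k => t k • (x k - xb)) atTop (nhds d)}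

/-- MPSC linearization cone. -/
def LCone (g : Fin m → Vec n → ℝ) (h : Fin p → Vec n → ℝ)
    (G H : Fin l → Vec n → ℝ) (xb : Vec n) : Set (Vec n) :=
  {d | (∀ i ∈ Ig g xb, fderiv ℝ (g i) xb d ≤ 0) ∧ (∀ j, fderiv ℝ (h j) xb d = 0) ∧
    (∀ k ∈ IG G H xb, fderiv ℝ (G k) xb d = 0) ∧ (∀ k ∈ IH G H xb, fderiv ℝ (H k) xb d = 0) ∧
    ∀ k ∈ IGH G H xb, fderiv ℝ (G k) xb d * fderiv ℝ (H k) xb d = 0}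

/-- Branch linearization cone. -/
def BranchLCone (g : Fin m → Vec n → ℝ) (h : Fin p → Vec n → ℝ)
    (G H : Fin l → Vec n → ℝ) (xb : Vec n) (β1 β2 : Set (Fin l)) : Set (Vec n) :=
  {d | (∀ i ∈ Ig g xb, fderiv ℝ (g i) xb d ≤ 0) ∧ (∀ j, fderiv ℝ (h j) xb d = 0) ∧
    (∀ k ∈ IG G H xb ∪ β1, fderiv ℝ (G k) xb d = 0) ∧
    ∀ k ∈ IH G H xb ∪ β2, fderiv ℝ (H k) xb d = 0}

/-- MPSC critical subspace. -/
def CritSubspace (g : Fin m → Vec n → ℝ) (h : Fin p → Vec n → ℝ)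
    (G H : Fin l → Vec n → ℝ) (xb : Vec n) : Set (Vec n) :=
  {d | (∀ i ∈ Ig g xb, fderiv ℝ (g i) xb d = 0) ∧ (∀ j, fderiv ℝ (h j) xb d = 0) ∧
    (∀ k ∈ IG G H xb ∪ IGH G H xb, fderiv ℝ (G k) xb d = 0) ∧
    ∀ k ∈ IH G H xb ∪ IGH G H xb, fderiv ℝ (H k) xb d = 0}

/-- Rank (dimension of the span) of the family of gradients
{∇g_i(x)}_{i∈I1} ∪ {∇h_j(x)}_j ∪ {∇G_k(x)}_{k∈I3} ∪ {∇H_k(x)}_{k∈I4}. -/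
def gradRank (g : Fin m → Vec n → ℝ) (h : Fin p → Vec n → ℝ)
    (G H : Fin l → Vec n → ℝ) (I1 : Set (Fin m)) (I3 I4 : Set (Fin l)) (x : Vec n) : ℕ :=
  Module.finrank ℝ ↥(Submodule.span ℝ
    ((fun i => gradient (g i) x) '' I1 ∪ Set.range (fun j => gradient (h j) x) ∪
     (fun k => gradient (G k) x) '' I3 ∪ (fun k => gradient (H k) x) '' I4))

/-- MPSC-LICQ. -/
def LICQ (g : Fin m → Vec n → ℝ) (h : Fin p → Vec n → ℝ)
    (G H : Fin l → Vec n → ℝ) (xb : Vec n) : Prop :=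
  ∀ (lam : Fin m → ℝ) (ρ : Fin p → ℝ) (μ ν : Fin l → ℝ),
    (∀ i, i ∉ Ig g xb → lam i = 0) →
    (∀ k, k ∉ IG G H xb ∪ IGH G H xb → μ k = 0) →
    (∀ k, k ∉ IH G H xb ∪ IGH G H xb → ν k = 0) →
    ∑ i, lam i • gradient (g i) xb + ∑ j, ρ j • gradient (h j) xb +
      ∑ k, μ k • gradient (G k) xb + ∑ k, ν k • gradient (H k) xb = 0 →
    lam = 0 ∧ ρ = 0 ∧ μ = 0 ∧ ν = 0

/-- MPSC-RCRCQ. -/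
def RCRCQ (g : Fin m → Vec n → ℝ) (h : Fin p → Vec n → ℝ)
    (G H : Fin l → Vec n → ℝ) (xb : Vec n) : Prop :=
  ∃ ε > (0:ℝ), ∀ I1 : Set (Fin m), I1 ⊆ Ig g xb →
    ∀ I3 I4 : Set (Fin l), I3 ⊆ IGH G H xb → I4 ⊆ IGH G H xb →
      ∀ x : Vec n, ‖x - xb‖ < ε →
        gradRank g h G H I1 (I3 ∪ IG G H xb) (I4 ∪ IH G H xb) x =
        gradRank g h G H I1 (I3 ∪ IG G H xb) (I4 ∪ IH G H xb) xb

/-- MPSC-WCR. -/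
def WCR (g : Fin m → Vec n → ℝ) (h : Fin p → Vec n → ℝ)
    (G H : Fin l → Vec n → ℝ) (xb : Vec n) : Prop :=
  ∃ ε > (0:ℝ), ∀ x : Vec n, ‖x - xb‖ < ε →
    gradRank g h G H (Ig g xb) (IG G H xb ∪ IGH G H xb) (IH G H xb ∪ IGH G H xb) x =
    gradRank g h G H (Ig g xb) (IG G H xb ∪ IGH G H xb) (IH G H xb ∪ IGH G H xb) xb

/-- MPSC-PWCR. -/
def PWCR (g : Fin m → Vec n → ℝ) (h : Fin p → Vec n → ℝ)
    (G H : Fin l → Vec n → ℝ) (xb : Vec n) : Prop :=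
  ∀ β1 β2 : Set (Fin l), Partition G H xb β1 β2 →
    ∃ ε > (0:ℝ), ∀ x : Vec n, ‖x - xb‖ < ε →
      gradRank g h G H (Ig g xb) (IG G H xb ∪ β1) (IH G H xb ∪ β2) x =
      gradRank g h G H (Ig g xb) (IG G H xb ∪ β1) (IH G H xb ∪ β2) xb

/-- The index set I_g^- associated with a branch (β1, β2). -/
def IgMinus (g : Fin m → Vec n → ℝ) (h : Fin p → Vec n → ℝ)
    (G H : Fin l → Vec n → ℝ) (xb : Vec n) (β1 β2 : Set (Fin l)) : Set (Fin m) :=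
  {i | i ∈ Ig g xb ∧ ∃ (lam : Fin m → ℝ) (ρ : Fin p → ℝ) (μ ν : Fin l → ℝ),
    (∀ i', 0 ≤ lam i') ∧ (∀ i', i' ∉ Ig g xb \ {i} → lam i' = 0) ∧
    (∀ k, k ∉ IG G H xb ∪ β1 → μ k = 0) ∧ (∀ k, k ∉ IH G H xb ∪ β2 → ν k = 0) ∧
    -gradient (g i) xb = ∑ i', lam i' • gradient (g i') xb + ∑ j, ρ j • gradient (h j) xb +
      ∑ k, μ k • gradient (G k) xb + ∑ k, ν k • gradient (H k) xb}

/-- MPSC-PCRSC. -/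
def PCRSC (g : Fin m → Vec n → ℝ) (h : Fin p → Vec n → ℝ)
    (G H : Fin l → Vec n → ℝ) (xb : Vec n) : Prop :=
  ∀ β1 β2 : Set (Fin l), Partition G H xb β1 β2 →
    ∃ ε > (0:ℝ), ∀ x : Vec n, ‖x - xb‖ < ε →
      gradRank g h G H (IgMinus g h G H xb β1 β2) (IG G H xb ∪ β1) (IH G H xb ∪ β2) x =
      gradRank g h G H (IgMinus g h G H xb β1 β2) (IG G H xb ∪ β1) (IH G H xb ∪ β2) xb

/-- A twice differentiable arc on [0, δ) (one-sided at the endpoint 0),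
with first derivative ξ'. -/
def TwiceDiffArc (δ : ℝ) (ξ ξ' : ℝ → Vec n) : Prop :=
  (∀ t ∈ Ico (0:ℝ) δ, HasDerivWithinAt ξ (ξ' t) (Ico (0:ℝ) δ) t) ∧
  ∀ t ∈ Ico (0:ℝ) δ, DifferentiableWithinAt ℝ ξ' (Ico (0:ℝ) δ) t

/-- MPSC-SSOCQ. -/
def SSOCQ (g : Fin m → Vec n → ℝ) (h : Fin p → Vec n → ℝ)
    (G H : Fin l → Vec n → ℝ) (xb : Vec n) : Prop :=
  ∀ d ∈ LCone g h G H xb, d ≠ 0 →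
    ∃ δ > (0:ℝ), ∃ J K : Set (Fin l), J ⊆ IGH G H xb ∧ K ⊆ IGH G H xb ∧
      ∃ ξ ξ' : ℝ → Vec n, TwiceDiffArc δ ξ ξ' ∧
        (∀ t ∈ Ico (0:ℝ) δ, ξ t ∈ Feas g h G H) ∧
        ξ 0 = xb ∧ ξ' 0 = d ∧
        (∀ t ∈ Ico (0:ℝ) δ, ∀ i ∈ Ig g xb, fderiv ℝ (g i) xb d = 0 → g i (ξ t) = 0) ∧
        (∀ t ∈ Ico (0:ℝ) δ, ∀ k ∈ IG G H xb ∪ J, G k (ξ t) = 0) ∧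
        ∀ t ∈ Ico (0:ℝ) δ, ∀ k ∈ IH G H xb ∪ K, H k (ξ t) = 0

/-- MPSC-WSOCQ. -/
def WSOCQ (g : Fin m → Vec n → ℝ) (h : Fin p → Vec n → ℝ)
    (G H : Fin l → Vec n → ℝ) (xb : Vec n) : Prop :=
  ∀ d ∈ CritSubspace g h G H xb, d ≠ 0 →
    ∃ δ > (0:ℝ), ∃ J K : Set (Fin l), J ⊆ IGH G H xb ∧ K ⊆ IGH G H xb ∧
      ∃ ζ ζ' : ℝ → Vec n, TwiceDiffArc δ ζ ζ' ∧
        (∀ t ∈ Ico (0:ℝ) δ, ζ t ∈ Feas g h G H) ∧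
        ζ 0 = xb ∧ ζ' 0 = d ∧
        (∀ t ∈ Ico (0:ℝ) δ, ∀ i ∈ Ig g xb, g i (ζ t) = 0) ∧
        (∀ t ∈ Ico (0:ℝ) δ, ∀ k ∈ IG G H xb ∪ J, G k (ζ t) = 0) ∧
        ∀ t ∈ Ico (0:ℝ) δ, ∀ k ∈ IH G H xb ∪ K, H k (ζ t) = 0

/-- The S-stationarity system for multipliers (λ, ρ, μ, ν) at xb. -/
def SStationarySystem (f : Vec n → ℝ) (g : Fin m → Vec n → ℝ) (h : Fin p → Vec n → ℝ)
    (G H : Fin l → Vec n → ℝ) (xb : Vec n)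
    (lam : Fin m → ℝ) (ρ : Fin p → ℝ) (μ ν : Fin l → ℝ) : Prop :=
  (∀ i, 0 ≤ lam i) ∧ (∀ i, lam i * g i xb = 0) ∧
  (∀ k ∈ IH G H xb ∪ IGH G H xb, μ k = 0) ∧
  (∀ k ∈ IG G H xb ∪ IGH G H xb, ν k = 0) ∧
  gradient f xb + ∑ i, lam i • gradient (g i) xb + ∑ j, ρ j • gradient (h j) xb +
    ∑ k, μ k • gradient (G k) xb + ∑ k, ν k • gradient (H k) xb = 0

def SStationary (f : Vec n → ℝ) (g : Fin m → Vec n → ℝ) (h : Fin p → Vec n → ℝ)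
    (G H : Fin l → Vec n → ℝ) (xb : Vec n) : Prop :=
  ∃ (lam : Fin m → ℝ) (ρ : Fin p → ℝ) (μ ν : Fin l → ℝ),
    SStationarySystem f g h G H xb lam ρ μ ν

/-- The M-stationarity system for multipliers (λ, ρ, μ, ν) at xb. -/
def MStationarySystem (f : Vec n → ℝ) (g : Fin m → Vec n → ℝ) (h : Fin p → Vec n → ℝ)
    (G H : Fin l → Vec n → ℝ) (xb : Vec n)
    (lam : Fin m → ℝ) (ρ : Fin p → ℝ) (μ ν : Fin l → ℝ) : Prop :=
  (∀ i, 0 ≤ lam i) ∧ (∀ i, lam i * g i xb = 0) ∧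
  (∀ k ∈ IH G H xb, μ k = 0) ∧ (∀ k ∈ IG G H xb, ν k = 0) ∧
  (∀ k ∈ IGH G H xb, μ k * ν k = 0) ∧
  gradient f xb + ∑ i, lam i • gradient (g i) xb + ∑ j, ρ j • gradient (h j) xb +
    ∑ k, μ k • gradient (G k) xb + ∑ k, ν k • gradient (H k) xb = 0

def MStationary (f : Vec n → ℝ) (g : Fin m → Vec n → ℝ) (h : Fin p → Vec n → ℝ)
    (G H : Fin l → Vec n → ℝ) (xb : Vec n) : Prop :=
  ∃ (lam : Fin m → ℝ) (ρ : Fin p → ℝ) (μ ν : Fin l → ℝ),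
    MStationarySystem f g h G H xb lam ρ μ ν

/-- Local optimality for (MPSC). -/
def LocallyOptimal (f : Vec n → ℝ) (g : Fin m → Vec n → ℝ) (h : Fin p → Vec n → ℝ)
    (G H : Fin l → Vec n → ℝ) (xb : Vec n) : Prop :=
  xb ∈ Feas g h G H ∧ ∃ ε > (0:ℝ), ∀ x ∈ Feas g h G H, ‖x - xb‖ < ε → f xb ≤ f x

/-- Hessian quadratic form dᵀ∇²φ(x)d. -/
def hessForm (φ : Vec n → ℝ) (x d : Vec n) : ℝ :=
  iteratedFDeriv ℝ 2 φ x ![d, d]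

/-- The Lagrange function ℓ. -/
def lagr (f : Vec n → ℝ) (g : Fin m → Vec n → ℝ) (h : Fin p → Vec n → ℝ)
    (G H : Fin l → Vec n → ℝ)
    (lam : Fin m → ℝ) (ρ : Fin p → ℝ) (μ ν : Fin l → ℝ) : Vec n → ℝ :=
  fun x => f x + ∑ i, lam i * g i x + ∑ j, ρ j * h j x +
    ∑ k, μ k * G k x + ∑ k, ν k * H k x

/-- Constraint-violation residual. -/
def residual (g : Fin m → Vec n → ℝ) (h : Fin p → Vec n → ℝ)
    (G H : Fin l → Vec n → ℝ) (x : Vec n) : ℝ :=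
  Real.sqrt (∑ i, max (g i x) 0 ^ 2 + ∑ j, h j x ^ 2 + ∑ k, min (G k x ^ 2) (H k x ^ 2))

/-- Penalty function P_κ. -/
def Pen (f : Vec n → ℝ) (g : Fin m → Vec n → ℝ) (h : Fin p → Vec n → ℝ)
    (G H : Fin l → Vec n → ℝ) (κ : ℝ) (x : Vec n) : ℝ :=
  f x + κ * residual g h G H x

/-- MPSC piecewise second-order quasi-normality. -/
def PSOQN (g : Fin m → Vec n → ℝ) (h : Fin p → Vec n → ℝ)
    (G H : Fin l → Vec n → ℝ) (xb : Vec n) : Prop :=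
  ∀ β1 β2 : Set (Fin l), Partition G H xb β1 β2 →
    ¬ ∃ (lam : Fin m → ℝ) (ρ : Fin p → ℝ) (μ ν : Fin l → ℝ),
      (∀ i, 0 ≤ lam i) ∧
      (∀ k, k ∉ IG G H xb ∪ β1 → μ k = 0) ∧ (∀ k, k ∉ IH G H xb ∪ β2 → ν k = 0) ∧
      ¬(lam = 0 ∧ ρ = 0 ∧ μ = 0 ∧ ν = 0) ∧
      (∑ i, lam i • gradient (g i) xb + ∑ j, ρ j • gradient (h j) xb +
        ∑ k, μ k • gradient (G k) xb + ∑ k, ν k • gradient (H k) xb = 0) ∧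
      (∀ d : Vec n, (∀ i ∈ Ig g xb, fderiv ℝ (g i) xb d = 0) →
        (∀ j, fderiv ℝ (h j) xb d = 0) →
        (∀ k ∈ IG G H xb ∪ β1, fderiv ℝ (G k) xb d = 0) →
        (∀ k ∈ IH G H xb ∪ β2, fderiv ℝ (H k) xb d = 0) →
        0 ≤ ∑ i, lam i * hessForm (g i) xb d + ∑ j, ρ j * hessForm (h j) xb d +
          ∑ k, μ k * hessForm (G k) xb d + ∑ k, ν k * hessForm (H k) xb d) ∧
      ∃ xs : ℕ → Vec n, Tendsto xs atTop (nhds xb) ∧ ∀ s,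
        (∀ i, 0 < lam i → 0 < lam i * g i (xs s)) ∧
        (∀ j, ρ j ≠ 0 → 0 < ρ j * h j (xs s)) ∧
        (∀ k, μ k ≠ 0 → 0 < μ k * G k (xs s)) ∧
        (∀ k, ν k ≠ 0 → 0 < ν k * H k (xs s))

set_option linter.unusedSectionVars false
namespace FarkasAux

open scoped Classical RealInnerProductSpace

variable {E : Type*} [NormedAddCommGroup E] [InnerProductSpace ℝ E] [FiniteDimensional ℝ E]
variable {ι : Type*} [Fintype ι]

lemma cone_caratheodory (w : ι → E) (t : Finset ι) :
    ∀ (c : ι → ℝ), (∀ i, 0 ≤ c i) →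
    ∃ t' : Finset ι, t' ⊆ t ∧ LinearIndependent ℝ (fun i : t' => w i) ∧
      ∃ c' : ι → ℝ, (∀ i, 0 ≤ c' i) ∧ ∑ i ∈ t', c' i • w i = ∑ i ∈ t, c i • w i := by
  induction t using Finset.strongInduction with
  | _ t IH =>
    intro c hc
    by_cases hli : LinearIndependent ℝ (fun i : t => w i)
    · exact ⟨t, Finset.Subset.refl t, hli, c, hc, rfl⟩
    · obtain ⟨gg, hg0, i₁, hi₁⟩ := Fintype.not_linearIndependent_iff.mp hli
      have key : ∀ d : ι → ℝ, (∑ i ∈ t, d i • w i = 0) → (∃ i ∈ t, 0 < d i) →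
          ∃ t' : Finset ι, t' ⊆ t ∧ LinearIndependent ℝ (fun i : t' => w i) ∧
          ∃ c' : ι → ℝ, (∀ i, 0 ≤ c' i) ∧ ∑ i ∈ t', c' i • w i = ∑ i ∈ t, c i • w i := by
        intro d hdsum hdpos
        have hTne : (t.filter (fun i => 0 < d i)).Nonempty := by
          obtain ⟨i, hit, hdi⟩ := hdpos
          exact ⟨i, Finset.mem_filter.mpr ⟨hit, hdi⟩⟩
        obtain ⟨i₀, hi₀T, hmin⟩ := Finset.exists_min_image _ (fun i => c i / d i) hTne
        obtain ⟨hi₀t, hdi₀⟩ := Finset.mem_filter.mp hi₀T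
        set r : ℝ := c i₀ / d i₀ with hr
        have hr0 : 0 ≤ r := div_nonneg (hc i₀) hdi₀.le
        set c'' : ι → ℝ := fun i => if i ∈ t then c i - r * d i else 0 with hc''
        have hc''nn : ∀ i, 0 ≤ c'' i := by
          intro i
          by_cases hit : i ∈ t
          · simp only [hc'', if_pos hit]
            by_cases hdi : 0 < d i
            · have := hmin i (Finset.mem_filter.mpr ⟨hit, hdi⟩)
              have : r * d i ≤ c i := by
                rw [le_div_iff₀ hdi] at this; linarith
              linarith
            · push_neg at hdi
              nlinarith [hc i]
          · simp [hc'', hit]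
        have hc''i₀ : c'' i₀ = 0 := by
          simp only [hc'', if_pos hi₀t, hr]
          field_simp
          ring
        have hsum2 : ∑ i ∈ t, c'' i • w i = ∑ i ∈ t, c i • w i := by
          have : ∀ i ∈ t, c'' i • w i = c i • w i - r • (d i • w i) := by
            intro i hit
            simp only [hc'', if_pos hit, sub_smul, smul_smul]
          rw [Finset.sum_congr rfl this, Finset.sum_sub_distrib, ← Finset.smul_sum, hdsum,
            smul_zero, sub_zero]
        have hsum3 : ∑ i ∈ t.erase i₀, c'' i • w i = ∑ i ∈ t, c'' i • w i :=
          Finset.sum_erase _ (by rw [hc''i₀, zero_smul])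
        obtain ⟨t', ht'sub, hli', c', hc', hsum'⟩ :=
          IH (t.erase i₀) (Finset.erase_ssubset hi₀t) c'' hc''nn
        exact ⟨t', ht'sub.trans (Finset.erase_subset _ _), hli', c', hc', by
          rw [hsum', hsum3, hsum2]⟩
      set d : ι → ℝ := fun i => if h : i ∈ t then gg ⟨i, h⟩ else 0 with hd
      have hdsum : ∑ i ∈ t, d i • w i = 0 := by
        rw [← Finset.sum_coe_sort t (fun i => d i • w i), ← hg0]
        exact Finset.sum_congr rfl fun i _ => by simp [hd, i.2]
      have hdi₁ : d i₁ ≠ 0 := by simpa [hd, i₁.2] using hi₁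
      by_cases hpos : ∃ i ∈ t, 0 < d i
      · exact key d hdsum hpos
      · push_neg at hpos
        refine key (fun i => -d i) (by simp [Finset.sum_neg_distrib, hdsum]) ?_
        refine ⟨i₁, i₁.2, ?_⟩
        have h1 := hpos i₁ i₁.2
        have h2 : d i₁ < 0 := lt_of_le_of_ne h1 hdi₁
        simpa using h2

lemma indep_cone_closed (w : ι → E) (t : Finset ι)
    (hli : LinearIndependent ℝ (fun i : t => w i)) :
    IsClosed {x : E | ∃ c : ι → ℝ, (∀ i, 0 ≤ c i) ∧ ∑ i ∈ t, c i • w i = x} := by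
  set L : ({i // i ∈ t} → ℝ) →ₗ[ℝ] E :=
    { toFun := fun c => ∑ i : {i // i ∈ t}, c i • w i
      map_add' := fun a b => by simp [add_smul, Finset.sum_add_distrib]
      map_smul' := fun r a => by simp [Finset.smul_sum, smul_smul] } with hL
  have hker : LinearMap.ker L = ⊥ := by
    rw [LinearMap.ker_eq_bot']
    intro cc hcc
    funext i
    exact Fintype.linearIndependent_iff.mp hli cc hcc i
  have hce := LinearMap.isClosedEmbedding_of_injective (f := L) hker
  have hset : {x : E | ∃ c : ι → ℝ, (∀ i, 0 ≤ c i) ∧ ∑ i ∈ t, c i • w i = x}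
      = L '' {c : {i // i ∈ t} → ℝ | ∀ i, 0 ≤ c i} := by
    ext x
    constructor
    · rintro ⟨c, hc, rfl⟩
      refine ⟨fun i => c i, fun i => hc i, ?_⟩
      simp only [hL, LinearMap.coe_mk, AddHom.coe_mk]
      exact Finset.sum_coe_sort t (fun i => c i • w i)
    · rintro ⟨cc, hcc, rfl⟩
      refine ⟨fun i => if h : i ∈ t then cc ⟨i, h⟩ else 0, fun i => ?_, ?_⟩
      · by_cases h : i ∈ t
        · simpa [h] using hcc ⟨i, h⟩
        · simp [h]
      · simp only [hL, LinearMap.coe_mk, AddHom.coe_mk]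
        rw [← Finset.sum_coe_sort t (fun i => (if h : i ∈ t then cc ⟨i, h⟩ else 0) • w i)]
        exact Finset.sum_congr rfl fun i _ => by simp [i.2]
  rw [hset]
  refine hce.isClosedMap _ ?_
  have : {c : {i // i ∈ t} → ℝ | ∀ i, 0 ≤ c i} = ⋂ i, {c | 0 ≤ c i} := by
    ext c; simp [Set.mem_iInter]
  rw [this]
  exact isClosed_iInter fun i => isClosed_le continuous_const (continuous_apply i)

lemma cone_isClosed (w : ι → E) :
    IsClosed {x : E | ∃ c : ι → ℝ, (∀ i, 0 ≤ c i) ∧ ∑ i, c i • w i = x} := by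
  have hset : {x : E | ∃ c : ι → ℝ, (∀ i, 0 ≤ c i) ∧ ∑ i, c i • w i = x}
      = ⋃ t ∈ {t : Finset ι | LinearIndependent ℝ (fun i : t => w i)},
          {x : E | ∃ c : ι → ℝ, (∀ i, 0 ≤ c i) ∧ ∑ i ∈ t, c i • w i = x} := by
    ext x
    simp only [Set.mem_iUnion, Set.mem_setOf_eq]
    constructor
    · rintro ⟨c, hc, rfl⟩
      obtain ⟨t', _, hli, c', hc', hsum⟩ := cone_caratheodory w Finset.univ c hc
      exact ⟨t', hli, c', hc', hsum⟩
    · rintro ⟨t, hli, c, hc, rfl⟩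
      refine ⟨fun i => if i ∈ t then c i else 0,
        fun i => by by_cases h : i ∈ t <;> simp [h, hc i], ?_⟩
      rw [Finset.sum_congr rfl (fun i (_ : i ∈ Finset.univ) =>
        (by split_ifs <;> simp : (if i ∈ t then c i else 0) • w i
          = if i ∈ t then c i • w i else 0)), Finset.sum_ite_mem, Finset.univ_inter]
  rw [hset]
  exact Set.Finite.isClosed_biUnion (Set.toFinite _) fun t ht => indep_cone_closed w t ht

lemma farkas (w : ι → E) (b : E)
    (hyp : ∀ y : E, (∀ i, 0 ≤ ⟪w i, y⟫) → 0 ≤ ⟪b, y⟫) :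
    ∃ c : ι → ℝ, (∀ i, 0 ≤ c i) ∧ ∑ i, c i • w i = b := by
  set K : ConvexCone ℝ E :=
    { carrier := {x : E | ∃ c : ι → ℝ, (∀ i, 0 ≤ c i) ∧ ∑ i, c i • w i = x}
      smul_mem' := by
        rintro r hr x ⟨c, hc, rfl⟩
        exact ⟨fun i => r * c i, fun i => mul_nonneg hr.le (hc i), by
          rw [Finset.smul_sum]; exact Finset.sum_congr rfl fun i _ => by rw [smul_smul]⟩
      add_mem' := by
        rintro x ⟨c, hc, rfl⟩ y ⟨c', hc', rfl⟩
        exact ⟨fun i => c i + c' i, fun i => add_nonneg (hc i) (hc' i), by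
          rw [← Finset.sum_add_distrib]
          exact Finset.sum_congr rfl fun i _ => by rw [add_smul]⟩ } with hK
  by_contra hnb
  have hbK : b ∉ K := hnb
  have hne : (K : Set E).Nonempty := ⟨0, 0, fun i => le_refl 0, by simp⟩
  obtain ⟨y, hy1, hy2⟩ : ∃ y, (∀ x ∈ K, 0 ≤ ⟪x, y⟫) ∧ ⟪y, b⟫ < 0 := by
    let C : ProperCone ℝ E :=
      { carrier := {x : E | ∃ c : ι → ℝ, (∀ i, 0 ≤ c i) ∧ ∑ i, c i • w i = x}
        zero_mem' := ⟨0, fun i => le_refl 0, by simp⟩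
        add_mem' := fun hx hy => K.add_mem' hx hy
        smul_mem' := by
          rintro ⟨r, hr⟩ x ⟨c, hc, rfl⟩
          exact ⟨fun i => r * c i, fun i => mul_nonneg hr (hc i), by
            show _ = r • ∑ i, c i • w i
            rw [Finset.smul_sum]; exact Finset.sum_congr rfl fun i _ => by rw [smul_smul]⟩
        isClosed' := cone_isClosed w }
    obtain ⟨y, hy1, hy2⟩ := C.hyperplane_separation' (x₀ := b) hbK
    exact ⟨y, hy1, by rwa [real_inner_comm]⟩
  have hw : ∀ i, w i ∈ K := by
    intro i
    refine ⟨fun j => if j = i then 1 else 0, fun j => by positivity, ?_⟩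
    rw [Finset.sum_congr rfl (fun j (_ : j ∈ Finset.univ) =>
      (by split_ifs with hji <;> simp [hji] : (if j = i then (1:ℝ) else 0) • w j
        = if j = i then w j else 0))]
    simp
  have h0 := hyp y fun i => hy1 _ (hw i)
  rw [real_inner_comm] at hy2
  linarith

end FarkasAux

set_option linter.unusedSectionVars true
set_option maxHeartbeats 1000000
open scoped RealInnerProductSpace

theorem local_opt_ssocq_implies_mstationary {n m p l : ℕ} (f : Vec n → ℝ) (g : Fin m → Vec n → ℝ)
    (h : Fin p → Vec n → ℝ) (G H : Fin l → Vec n → ℝ)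
    (hf : ContDiff ℝ 2 f) (hg : ∀ i, ContDiff ℝ 2 (g i)) (hh : ∀ j, ContDiff ℝ 2 (h j))
    (hG : ∀ k, ContDiff ℝ 2 (G k)) (hH : ∀ k, ContDiff ℝ 2 (H k))
    (xb : Vec n) (hxb : xb ∈ Feas g h G H)
    (hopt : LocallyOptimal f g h G H xb) (hcq : SSOCQ g h G H xb) :
    MStationary f g h G H xb := by
  classical
  obtain ⟨-, ε, hε, hmin⟩ := hopt
  have hip : ∀ (φ : Vec n → ℝ) (y : Vec n), ⟪gradient φ xb, y⟫ = fderiv ℝ φ xb y := by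
    intro φ y
    simp only [gradient]
    exact InnerProductSpace.toDual_symm_apply
  -- Step 1: dual inequality on the branch cone
  have hdual : ∀ y : Vec n, (∀ i ∈ Ig g xb, fderiv ℝ (g i) xb y ≤ 0) →
      (∀ j, fderiv ℝ (h j) xb y = 0) →
      (∀ k ∈ IG G H xb ∪ IGH G H xb, fderiv ℝ (G k) xb y = 0) →
      (∀ k ∈ IH G H xb, fderiv ℝ (H k) xb y = 0) → 0 ≤ fderiv ℝ f xb y := by
    intro y h1 h2 h3 h4
    rcases eq_or_ne y 0 with rfl | hy0
    · simp
    have hyL : y ∈ LCone g h G H xb :=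
      ⟨h1, h2, fun k hk => h3 k (Or.inl hk), h4,
        fun k hk => by rw [h3 k (Or.inr hk), zero_mul]⟩
    obtain ⟨δ, hδ, J, K, hJ, hK, ξ, ξ', harc, hfeas, hξ0, hξ'0, -, -, -⟩ := hcq y hyL hy0
    have h0mem : (0:ℝ) ∈ Ico (0:ℝ) δ := ⟨le_refl 0, hδ⟩
    have hderξ := harc.1 0 h0mem
    rw [hξ'0] at hderξ
    have hfd : HasFDerivAt f (fderiv ℝ f xb) (ξ 0) := by
      rw [hξ0]; exact (hf.differentiable two_ne_zero xb).hasFDerivAt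
    have hder : HasDerivWithinAt (fun t => f (ξ t)) (fderiv ℝ f xb y) (Ico (0:ℝ) δ) 0 :=
      hfd.comp_hasDerivWithinAt 0 hderξ
    rw [hasDerivWithinAt_iff_tendsto_slope, Set.Ico_diff_left] at hder
    haveI hnb : (𝓝[Ioo (0:ℝ) δ] (0:ℝ)).NeBot := by
      rw [← mem_closure_iff_nhdsWithin_neBot, closure_Ioo hδ.ne]
      exact ⟨le_refl 0, hδ.le⟩
    refine ge_of_tendsto hder ?_
    have hcont : Tendsto ξ (𝓝[Ioo (0:ℝ) δ] 0) (𝓝 xb) := by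
      have h5 := hderξ.continuousWithinAt
      rw [ContinuousWithinAt, hξ0] at h5
      exact h5.mono_left (nhdsWithin_mono _ Ioo_subset_Ico_self)
    filter_upwards [hcont (Metric.ball_mem_nhds xb hε), self_mem_nhdsWithin] with t hta htb
    have hft : f xb ≤ f (ξ t) := hmin (ξ t) (hfeas t (Ioo_subset_Ico_self htb))
      (by simpa [Metric.mem_ball, dist_eq_norm] using hta)
    show 0 ≤ slope (fun t => f (ξ t)) 0 t
    rw [slope_def_field, hξ0]
    have ht0 : (0:ℝ) < t := htb.1
    apply div_nonneg (by linarith) (by linarith)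
  -- Step 2: Farkas
  obtain ⟨c, hcnn, hsum⟩ := FarkasAux.farkas (E := Vec n)
    (ι := Fin m ⊕ Fin p ⊕ Fin p ⊕ Fin l ⊕ Fin l ⊕ Fin l ⊕ Fin l)
    (Sum.elim (fun i => if i ∈ Ig g xb then -gradient (g i) xb else 0)
    (Sum.elim (fun j => gradient (h j) xb)
    (Sum.elim (fun j => -gradient (h j) xb)
    (Sum.elim (fun k => if k ∈ IG G H xb ∪ IGH G H xb then gradient (G k) xb else 0)
    (Sum.elim (fun k => if k ∈ IG G H xb ∪ IGH G H xb then -gradient (G k) xb else 0)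
    (Sum.elim (fun k => if k ∈ IH G H xb then gradient (H k) xb else 0)
      (fun k => if k ∈ IH G H xb then -gradient (H k) xb else 0)))))))
    (gradient f xb) (by
    intro y hy
    rw [hip]
    apply hdual y
    · intro i hi
      have := hy (Sum.inl i)
      rw [Sum.elim_inl, if_pos hi, inner_neg_left, hip] at this
      linarith
    · intro j
      have u1 := hy (Sum.inr (Sum.inl j))
      have u2 := hy (Sum.inr (Sum.inr (Sum.inl j)))
      rw [Sum.elim_inr, Sum.elim_inl, hip] at u1
      rw [Sum.elim_inr, Sum.elim_inr, Sum.elim_inl, inner_neg_left, hip] at u2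
      linarith
    · intro k hk
      have u1 := hy (Sum.inr (Sum.inr (Sum.inr (Sum.inl k))))
      have u2 := hy (Sum.inr (Sum.inr (Sum.inr (Sum.inr (Sum.inl k)))))
      simp only [Sum.elim_inr, Sum.elim_inl, if_pos hk, inner_neg_left, hip] at u1 u2
      linarith
    · intro k hk
      have u1 := hy (Sum.inr (Sum.inr (Sum.inr (Sum.inr (Sum.inr (Sum.inl k))))))
      have u2 := hy (Sum.inr (Sum.inr (Sum.inr (Sum.inr (Sum.inr (Sum.inr k))))))
      simp only [Sum.elim_inr, Sum.elim_inl, if_pos hk, inner_neg_left, hip] at u1 u2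
      linarith)
  -- multipliers
  refine ⟨(fun i => if i ∈ Ig g xb then c (Sum.inl i) else 0),
    (fun j => c (Sum.inr (Sum.inr (Sum.inl j))) - c (Sum.inr (Sum.inl j))),
    (fun k => if k ∈ IG G H xb ∪ IGH G H xb then
      c (Sum.inr (Sum.inr (Sum.inr (Sum.inr (Sum.inl k))))) -
      c (Sum.inr (Sum.inr (Sum.inr (Sum.inl k)))) else 0),
    (fun k => if k ∈ IH G H xb then
      c (Sum.inr (Sum.inr (Sum.inr (Sum.inr (Sum.inr (Sum.inr k)))))) -
      c (Sum.inr (Sum.inr (Sum.inr (Sum.inr (Sum.inr (Sum.inl k)))))) else 0),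
    ?_, ?_, ?_, ?_, ?_, ?_⟩
  · intro i
    by_cases hi : i ∈ Ig g xb <;> simp [hi, hcnn (Sum.inl i)]
  · intro i
    dsimp only
    by_cases hi : i ∈ Ig g xb
    · rw [if_pos hi]
      have hgi : g i xb = 0 := hi
      rw [hgi, mul_zero]
    · rw [if_neg hi, zero_mul]
  · intro k hk
    dsimp only
    have hk' : k ∉ IG G H xb ∪ IGH G H xb := by
      intro hmem
      rcases hmem with hm | hm
      · exact hm.2 hk.2
      · exact hk.1 hm.1
    rw [if_neg hk']
  · intro k hk
    dsimp only
    have hk' : k ∉ IH G H xb := fun hm => hm.1 hk.1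
    rw [if_neg hk']
  · intro k hk
    dsimp only
    have hk' : k ∉ IH G H xb := fun hm => hm.1 hk.1
    rw [if_neg hk', mul_zero]
  · simp only [Fintype.sum_sum_type, Sum.elim_inl, Sum.elim_inr] at hsum
    have e1 : ∑ i, (if i ∈ Ig g xb then c (Sum.inl i) else 0) • gradient (g i) xb
        = -∑ i, c (Sum.inl i) • (if i ∈ Ig g xb then -gradient (g i) xb else 0) := by
      rw [← Finset.sum_neg_distrib]
      refine Finset.sum_congr rfl fun i _ => ?_
      by_cases hi : i ∈ Ig g xb <;> simp [hi]
    have e2 : ∑ j, (c (Sum.inr (Sum.inr (Sum.inl j))) - c (Sum.inr (Sum.inl j))) •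
          gradient (h j) xb
        = -(∑ j, c (Sum.inr (Sum.inl j)) • gradient (h j) xb
          + ∑ j, c (Sum.inr (Sum.inr (Sum.inl j))) • -gradient (h j) xb) := by
      rw [← Finset.sum_add_distrib, ← Finset.sum_neg_distrib]
      refine Finset.sum_congr rfl fun j _ => ?_
      rw [sub_smul, smul_neg]
      abel
    have e3 : ∑ k, (if k ∈ IG G H xb ∪ IGH G H xb then
          c (Sum.inr (Sum.inr (Sum.inr (Sum.inr (Sum.inl k))))) -
          c (Sum.inr (Sum.inr (Sum.inr (Sum.inl k)))) else 0) • gradient (G k) xb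
        = -(∑ k, c (Sum.inr (Sum.inr (Sum.inr (Sum.inl k)))) •
            (if k ∈ IG G H xb ∪ IGH G H xb then gradient (G k) xb else 0)
          + ∑ k, c (Sum.inr (Sum.inr (Sum.inr (Sum.inr (Sum.inl k))))) •
            (if k ∈ IG G H xb ∪ IGH G H xb then -gradient (G k) xb else 0)) := by
      rw [← Finset.sum_add_distrib, ← Finset.sum_neg_distrib]
      refine Finset.sum_congr rfl fun k _ => ?_
      by_cases hk : k ∈ IG G H xb ∪ IGH G H xb
      · rw [if_pos hk, if_pos hk, if_pos hk, sub_smul, smul_neg]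
        abel
      · rw [if_neg hk, if_neg hk, if_neg hk]
        simp
    have e4 : ∑ k, (if k ∈ IH G H xb then
          c (Sum.inr (Sum.inr (Sum.inr (Sum.inr (Sum.inr (Sum.inr k)))))) -
          c (Sum.inr (Sum.inr (Sum.inr (Sum.inr (Sum.inr (Sum.inl k)))))) else 0) •
            gradient (H k) xb
        = -(∑ k, c (Sum.inr (Sum.inr (Sum.inr (Sum.inr (Sum.inr (Sum.inl k)))))) •
            (if k ∈ IH G H xb then gradient (H k) xb else 0)
          + ∑ k, c (Sum.inr (Sum.inr (Sum.inr (Sum.inr (Sum.inr (Sum.inr k)))))) •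
            (if k ∈ IH G H xb then -gradient (H k) xb else 0)) := by
      rw [← Finset.sum_add_distrib, ← Finset.sum_neg_distrib]
      refine Finset.sum_congr rfl fun k _ => ?_
      by_cases hk : k ∈ IH G H xb
      · rw [if_pos hk, if_pos hk, if_pos hk, sub_smul, smul_neg]
        abel
      · rw [if_neg hk, if_neg hk, if_neg hk]
        simp
    rw [e1, e2, e3, e4, ← hsum]
    abel

end MPSC
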